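/- In Mem+, for all n, k ≥ 1 with n in the m-sector Δ_m(k) (i.e. m*k + T_m ≤ n < (m+1)*k + T_{m+1}, where T_j = j(j+1)/2), and for every j with 0 ≤ j < m, there exists i with 1 ≤ i ≤ n − k such that the option (n − k − i, k + i) lies in the j-sector Δ_j(k+i), i.e. j*(k+i) + T_j ≤ n − k − i < (j+1)*(k+i) + T_{j+1}. -/
import Mathlib


/-- Reachability: from any position (n, k) in the m-sector, every j-sector with
j < m is reachable by some legal move (removing k + i stones, 1 ≤ i ≤ n - k). -/
theorem memPlus_sector_reachability (n k m j : ℕ) (hn : 1 ≤ n) (hk : 1 ≤ k)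
    (h1 : m * k + m * (m + 1) / 2 ≤ n) (h2 : n < (m + 1) * k + (m + 1) * (m + 2) / 2)
    (hj : j < m) :
    ∃ i : ℕ, 1 ≤ i ∧ i ≤ n - k ∧
      j * (k + i) + j * (j + 1) / 2 ≤ n - k - i ∧
      n - k - i < (j + 1) * (k + i) + (j + 1) * (j + 2) / 2 := by
  have hm : j + 1 ≤ m := hj
  have hk1 : (j + 1) * k ≤ m * k := Nat.mul_le_mul_right k hm
  have hT : (j + 1) * (j + 2) / 2 ≤ m * (m + 1) / 2 :=
    Nat.div_le_div_right (Nat.mul_le_mul hm (by omega))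
  have hTstep2 : (j + 1) * (j + 2) / 2 = j * (j + 1) / 2 + (j + 1) := by
    have h2dvd : 2 ∣ j * (j + 1) := (Nat.even_mul_succ_self j).two_dvd
    have key : (j + 1) * (j + 2) = j * (j + 1) + 2 * (j + 1) := by ring
    omega
  -- n is at least the bottom of the (j+1)-sector
  have hge : (j + 1) * k + j * (j + 1) / 2 + (j + 1) ≤ n := by omega
  set N : ℕ := n - ((j + 1) * k + j * (j + 1) / 2) with hN
  set i : ℕ := N / (j + 1) with hi
  have hdm : (j + 1) * i + N % (j + 1) = N := Nat.div_add_mod N (j + 1)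
  have hmod : N % (j + 1) < j + 1 := Nat.mod_lt _ (by omega)
  have hnEq : n = (j + 1) * k + j * (j + 1) / 2 + (j + 1) * i + N % (j + 1) := by omega
  have e1 : (j + 1) * k = j * k + k := by ring
  have e2 : (j + 1) * i = j * i + i := by ring
  have e3 : j * (k + i) = j * k + j * i := by ring
  have e4 : (j + 1) * (k + i) = j * k + j * i + k + i := by ring
  have hNge : j + 1 ≤ N := by omega
  have hi1 : 1 ≤ i := (Nat.one_le_div_iff (by omega)).mpr hNge
  have hile : i ≤ n - k := by omega
  have hki : n - k - i = j * k + j * i + j * (j + 1) / 2 + N % (j + 1) := by omega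
  refine ⟨i, hi1, hile, ?_, ?_⟩
  · rw [hki, e3]; omega
  · rw [hki, e4, hTstep2]; omega
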